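/- The quintic polynomial λ⁵ + 3λ⁴ + 4λ³ - 10λ² + 26λ - 54 is irreducible over ℚ and has exactly one real root. -/

import Mathlib

open Polynomial

instance : Fact (Nat.Prime 41) := ⟨by norm_num⟩

/-- The reduction of the quintic modulo 41. -/
noncomputable def fbar : (ZMod 41)[X] :=
  X ^ 5 + C 3 * X ^ 4 + C 4 * X ^ 3 - C 10 * X ^ 2 + C 26 * X - C 54

lemma fbar_monic : fbar.Monic := by unfold fbar; monicity!

lemma fbar_natDegree : fbar.natDegree = 5 := by unfold fbar; compute_degree!

lemma fbar_coeff : fbar.coeff 0 = -54 ∧ fbar.coeff 1 = 26 ∧ fbar.coeff 2 = -10 ∧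
    fbar.coeff 3 = 4 ∧ fbar.coeff 4 = 3 := by
  unfold fbar
  refine ⟨?_, ?_, ?_, ?_, ?_⟩ <;>
    simp [coeff_add, coeff_sub, coeff_C_mul, coeff_X_pow, coeff_C]

lemma L2 : ∀ b c : ZMod 41,
    ¬(c * (-10 - c*(3-b) - b*(4 - c - b*(3-b))) = -54 ∧
      b * (-10 - c*(3-b) - b*(4 - c - b*(3-b))) + c * (4 - c - b*(3-b)) = 26) := by decide

lemma L1 : ∀ a : ZMod 41, a^5+3*a^4+4*a^3-10*a^2+26*a-54 ≠ 0 := by decide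

lemma fbar_no_root (a : ZMod 41) : ¬ fbar.IsRoot a := by
  intro h
  apply L1 a
  simpa [fbar, IsRoot] using h

-- the degree-2 factor case
lemma no_factor2 (g h : (ZMod 41)[X]) (hg : g.Monic) (hh : h.Monic)
    (hg2 : g.natDegree = 2) (hh3 : h.natDegree = 3) (hfgh : fbar = g * h) : False := by
  set b := g.coeff 1 with hb
  set c := g.coeff 0 with hc
  set d := h.coeff 2 with hd
  set e := h.coeff 1 with he
  set k := h.coeff 0 with hk
  have hgl : g.coeff 2 = 1 := by have := hg.coeff_natDegree; rwa [hg2] at this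
  have hhl : h.coeff 3 = 1 := by have := hh.coeff_natDegree; rwa [hh3] at this
  have hg3 : ∀ j, 2 < j → g.coeff j = 0 := fun j hj => coeff_eq_zero_of_natDegree_lt (hg2 ▸ hj)
  have hh4 : ∀ j, 3 < j → h.coeff j = 0 := fun j hj => coeff_eq_zero_of_natDegree_lt (hh3 ▸ hj)
  have key : ∀ n, fbar.coeff n = (g * h).coeff n := fun n => by rw [hfgh]
  have e0 := key 0
  have e1 := key 1
  have e2 := key 2
  have e3 := key 3
  have e4 := key 4
  obtain ⟨c0, c1, c2, c3, c4⟩ := fbar_coeff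
  rw [c0, coeff_mul, Finset.Nat.sum_antidiagonal_eq_sum_range_succ_mk] at e0
  rw [c1, coeff_mul, Finset.Nat.sum_antidiagonal_eq_sum_range_succ_mk] at e1
  rw [c2, coeff_mul, Finset.Nat.sum_antidiagonal_eq_sum_range_succ_mk] at e2
  rw [c3, coeff_mul, Finset.Nat.sum_antidiagonal_eq_sum_range_succ_mk] at e3
  rw [c4, coeff_mul, Finset.Nat.sum_antidiagonal_eq_sum_range_succ_mk] at e4
  simp [Finset.sum_range_succ, hgl, hhl, hg3, hh4, ← hb, ← hc, ← hd, ← he, ← hk] at e0 e1 e2 e3 e4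
  have hd' : d = 3 - b := by linear_combination -e4
  have hE : e = 4 - c - b*(3-b) := by linear_combination -e3 - b*hd'
  have hK : k = -10 - c*(3-b) - b*(4 - c - b*(3-b)) := by
    linear_combination -e2 - c*hd' - b*hE
  exact L2 b c ⟨by linear_combination -e0 - c*hK, by linear_combination -e1 - b*hK - c*hE⟩

lemma no_split (g h : (ZMod 41)[X]) (hg : g.Monic) (hgh : fbar = g * h)
    (h12 : g.natDegree = 1 ∨ g.natDegree = 2) : False := by
  have hh : h.Monic := hg.of_mul_monic_left (hgh ▸ fbar_monic)
  have hdeg : g.natDegree + h.natDegree = 5 := by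
    rw [← natDegree_mul hg.ne_zero hh.ne_zero, ← hgh, fbar_natDegree]
  rcases h12 with h1 | h2
  · have hgeq : g = X + C (g.coeff 0) := hg.eq_X_add_C h1
    apply fbar_no_root (-(g.coeff 0))
    rw [hgh, IsRoot, eval_mul, hgeq]
    simp
  · exact no_factor2 g h hg hh h2 (by omega) hgh

lemma fbar_irred : Irreducible fbar := by
  constructor
  · intro hu
    have := natDegree_eq_zero_of_isUnit hu
    rw [fbar_natDegree] at this; exact absurd this (by norm_num)
  · intro a b hab
    by_contra hcon
    push_neg at hcon
    obtain ⟨ha, hb⟩ := hcon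
    have ha0 : a ≠ 0 := fun h => by
      rw [h, zero_mul] at hab; exact fbar_monic.ne_zero hab
    have hb0 : b ≠ 0 := fun h => by
      rw [h, mul_zero] at hab; exact fbar_monic.ne_zero hab
    set u := a.leadingCoeff with hu
    have hu0 : u ≠ 0 := leadingCoeff_ne_zero.mpr ha0
    set a' := a * C u⁻¹ with ha'
    set b' := C u * b with hb'
    have ha'm : a'.Monic := monic_mul_leadingCoeff_inv ha0
    have hab' : fbar = a' * b' := by
      rw [hab, ha', hb']
      rw [mul_assoc, ← mul_assoc (C u⁻¹), ← C_mul, inv_mul_cancel₀ hu0]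
      simp
    have hb'm : b'.Monic := ha'm.of_mul_monic_left (hab' ▸ fbar_monic)
    have hna : a'.natDegree = a.natDegree := by
      rw [ha', natDegree_mul ha0 (by simpa using hu0)]
      simp
    have hnb : b'.natDegree = b.natDegree := by
      rw [hb', natDegree_mul (by simpa using hu0) hb0]
      simp
    have hdeg : a'.natDegree + b'.natDegree = 5 := by
      rw [← natDegree_mul ha'm.ne_zero hb'm.ne_zero, ← hab', fbar_natDegree]
    have hdeg0 : ∀ p : (ZMod 41)[X], p ≠ 0 → ¬IsUnit p → 1 ≤ p.natDegree := by
      intro p hp0 hpu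
      rcases Nat.eq_zero_or_pos p.natDegree with h | h
      · obtain ⟨cp, hcp⟩ := natDegree_eq_zero.mp h
        have hcp0 : cp ≠ 0 := fun h0 => hp0 (by rw [← hcp, h0, map_zero])
        exact absurd (hcp ▸ isUnit_C.mpr (isUnit_iff_ne_zero.mpr hcp0)) hpu
      · exact h
    have h1 : 1 ≤ a'.natDegree := hna ▸ hdeg0 a ha0 ha
    have h2 : 1 ≤ b'.natDegree := hnb ▸ hdeg0 b hb0 hb
    rcases le_or_gt a'.natDegree 2 with hle | hlt
    · exact no_split a' b' ha'm hab' (by omega)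
    · exact no_split b' a' hb'm (by rw [hab', mul_comm]) (by omega)

/-- The quintic over the integers. -/
noncomputable def fZ : ℤ[X] := X ^ 5 + 3 * X ^ 4 + 4 * X ^ 3 - 10 * X ^ 2 + 26 * X - 54

lemma fZ_monic : fZ.Monic := by unfold fZ; monicity!

lemma map_fZ : fZ.map (Int.castRingHom (ZMod 41)) = fbar := by
  unfold fZ fbar
  simp only [Polynomial.map_add, Polynomial.map_sub, Polynomial.map_mul, Polynomial.map_pow,
    map_X, Polynomial.map_ofNat]
  simp only [map_ofNat]

lemma map_fZQ : fZ.map (Int.castRingHom ℚ) =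
    (X : ℚ[X]) ^ 5 + 3 * X ^ 4 + 4 * X ^ 3 - 10 * X ^ 2 + 26 * X - 54 := by
  unfold fZ
  simp only [Polynomial.map_add, Polynomial.map_sub, Polynomial.map_mul, Polynomial.map_pow,
    map_X, Polynomial.map_ofNat]

lemma Runiq : ∃! x : ℝ, x ^ 5 + 3 * x ^ 4 + 4 * x ^ 3 - 10 * x ^ 2 + 26 * x - 54 = 0 := by
  set f : ℝ → ℝ := fun x => x ^ 5 + 3 * x ^ 4 + 4 * x ^ 3 - 10 * x ^ 2 + 26 * x - 54 with hf
  have hder : ∀ x : ℝ, HasDerivAt f (5*x^4 + 12*x^3 + 12*x^2 - 20*x + 26) x := by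
    intro x
    have h5 := hasDerivAt_pow 5 x
    have h4 := (hasDerivAt_pow 4 x).const_mul (3:ℝ)
    have h3 := (hasDerivAt_pow 3 x).const_mul (4:ℝ)
    have h2 := (hasDerivAt_pow 2 x).const_mul (10:ℝ)
    have hx := (hasDerivAt_id' x).const_mul (26:ℝ)
    have h := ((((h5.add h4).add h3).sub h2).add hx).sub_const (54:ℝ)
    refine h.congr_deriv ?_
    push_cast
    ring
  have hpos : ∀ x : ℝ, (0:ℝ) < 5*x^4 + 12*x^3 + 12*x^2 - 20*x + 26 := by
    intro x
    nlinarith [sq_nonneg (x^2 + x), sq_nonneg (x - 1), sq_nonneg x, sq_nonneg (x^2 + 2*x),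
      sq_nonneg (x+1), sq_nonneg (x^2 - 1), sq_nonneg (x^2+x-1)]
  have hmono : StrictMono f :=
    strictMono_of_deriv_pos fun x => by rw [(hder x).deriv]; exact hpos x
  have hcont : Continuous f := by fun_prop
  have h1 : f 1 ≤ 0 := by norm_num [hf]
  have h2 : (0:ℝ) ≤ f 2 := by norm_num [hf]
  obtain ⟨x, hx, hfx⟩ := intermediate_value_Icc (by norm_num : (1:ℝ) ≤ 2) hcont.continuousOn
    ⟨h1, h2⟩
  exact ⟨x, hfx, fun y hy => hmono.injective (show f y = f x by rw [hfx]; exact hy)⟩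

/-- The quintic `λ⁵ + 3λ⁴ + 4λ³ - 10λ² + 26λ - 54` is irreducible over `ℚ`
and has exactly one real root. -/
theorem stmt_18 :
    Irreducible ((X : ℚ[X]) ^ 5 + 3 * X ^ 4 + 4 * X ^ 3 - 10 * X ^ 2 + 26 * X - 54) ∧
      ∃! x : ℝ, x ^ 5 + 3 * x ^ 4 + 4 * x ^ 3 - 10 * x ^ 2 + 26 * x - 54 = 0 := by
  constructor
  · have hZ : Irreducible fZ :=
      Monic.irreducible_of_irreducible_map (Int.castRingHom (ZMod 41)) fZ fZ_monic
        (map_fZ ▸ fbar_irred)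
    have hQ := (Polynomial.IsPrimitive.Int.irreducible_iff_irreducible_map_cast fZ_monic.isPrimitive).mp hZ
    rwa [map_fZQ] at hQ
  · exact Runiq
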